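/- Let m = m₋₁ ⊕ m₋₂ and m′ = m′₋₁ ⊕ m′₋₂ be graded real Lie algebras with dim m₋₁ = dim m′₋₁ = 3 and dim m₋₂ = dim m′₋₂ = 2, such that all brackets involving an element of degree −2 vanish and the bracket maps Λ²m₋₁ → m₋₂ and Λ²m′₋₁ → m′₋₂ are surjective. Then there exists a graded Lie algebra isomorphism from m to m′. In other words, there is only one isomorphism class of non-degenerate (3,5) nilpotent graded Lie algebra. -/

import Mathlib

noncomputable section

open Module


lemma exists_adapted_triple (m : Type*) [LieRing m] [LieAlgebra ℝ m]
    (m1 m2 : Submodule ℝ m)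
    (hd1 : finrank ℝ ↥m1 = 3) (hd2 : finrank ℝ ↥m2 = 2)
    (hbr : ∀ x ∈ m1, ∀ y ∈ m1, ⁅x, y⁆ ∈ m2) :
    ∃ e0 e1 e2 : m, Submodule.span ℝ {e0, e1, e2} = m1 ∧ ⁅e0, e1⁆ = 0 := by
  have fd1 : FiniteDimensional ℝ ↥m1 := .of_finrank_pos (by omega)
  have fd2 : FiniteDimensional ℝ ↥m2 := .of_finrank_pos (by omega)
  obtain ⟨bm⟩ : Nonempty (Basis (Fin 3) ℝ ↥m1) := ⟨Module.finBasisOfFinrankEq ℝ _ hd1⟩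
  set a : m := ↑(bm 0) with ha_def
  set b : m := ↑(bm 1) with hb_def
  set c : m := ↑(bm 2) with hc_def
  have ha : a ∈ m1 := (bm 0).2
  have hb : b ∈ m1 := (bm 1).2
  have hc : c ∈ m1 := (bm 2).2
  have hspan : Submodule.span ℝ {a, b, c} = m1 := by
    have h1 : Submodule.map m1.subtype ⊤ = m1 := Submodule.map_subtype_top m1
    rw [← bm.span_eq, Submodule.map_span, ← Set.range_comp] at h1
    have h2 : (m1.subtype ∘ bm) = ![a, b, c] := by
      funext i; fin_cases i <;> rfl
    have h3 : Set.range ![a, b, c] = {a, b, c} := by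
      ext x
      simp [Matrix.range_cons, Matrix.range_empty, Set.singleton_union, Set.union_empty]
      tauto
    rw [h2, h3] at h1
    exact h1
  set F : Fin 3 → ↥m2 := ![⟨⁅a, b⁆, hbr a ha b hb⟩, ⟨⁅a, c⁆, hbr a ha c hc⟩,
    ⟨⁅b, c⁆, hbr b hb c hc⟩] with hF
  have hdep : ¬ LinearIndependent ℝ F := by
    intro h
    have := h.fintype_card_le_finrank
    rw [hd2] at this
    simp at this
  obtain ⟨g, hg, i₀, hi₀⟩ := Fintype.not_linearIndependent_iff.mp hdep
  set α := g 0 with hα; set β := g 1 with hβ; set γ := g 2 with hγdef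
  have hrel : α • ⁅a, b⁆ + β • ⁅a, c⁆ + γ • ⁅b, c⁆ = 0 := by
    have := congrArg (Subtype.val) hg
    simpa [Fin.sum_univ_three, hF] using this
  have hba : ⁅b, a⁆ = -⁅a, b⁆ := by rw [← lie_skew]
  by_cases hγ : γ ≠ 0
  · refine ⟨β • a + γ • b, γ • c - α • a, a, ?_, ?_⟩
    · apply le_antisymm
      · rw [Submodule.span_le]
        rintro x hx
        simp only [Set.mem_insert_iff, Set.mem_singleton_iff] at hx
        rcases hx with rfl | rfl | rfl
        · exact m1.add_mem (m1.smul_mem _ ha) (m1.smul_mem _ hb)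
        · exact m1.sub_mem (m1.smul_mem _ hc) (m1.smul_mem _ ha)
        · exact ha
      · rw [← hspan, Submodule.span_le]
        set P := Submodule.span ℝ {β • a + γ • b, γ • c - α • a, a} with hP
        have he0 : (β • a + γ • b) ∈ P := Submodule.subset_span (by simp)
        have he1 : (γ • c - α • a) ∈ P := Submodule.subset_span (by simp)
        have he2 : a ∈ P := Submodule.subset_span (by simp)
        rintro x hx
        simp only [Set.mem_insert_iff, Set.mem_singleton_iff] at hx
        rcases hx with rfl | rfl | rfl
        · exact he2
        · have hbe : b = γ⁻¹ • ((β • a + γ • b) - β • a) := by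
            rw [add_sub_cancel_left, smul_smul, inv_mul_cancel₀ hγ, one_smul]
          rw [hbe]
          exact P.smul_mem _ (P.sub_mem he0 (P.smul_mem _ he2))
        · have hce : c = γ⁻¹ • ((γ • c - α • a) + α • a) := by
            rw [sub_add_cancel, smul_smul, inv_mul_cancel₀ hγ, one_smul]
          rw [hce]
          exact P.smul_mem _ (P.add_mem he1 (P.smul_mem _ he2))
    · have key : ⁅β • a + γ • b, γ • c - α • a⁆
          = γ • (α • ⁅a, b⁆ + β • ⁅a, c⁆ + γ • ⁅b, c⁆) := by
        simp only [lie_add, add_lie, lie_sub, sub_lie, lie_smul, smul_lie, lie_self,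
          smul_zero, sub_zero, hba]
        module
      rw [key, hrel, smul_zero]
  · push_neg at hγ
    by_cases hβ' : β ≠ 0
    · refine ⟨a, α • b + β • c, b, ?_, ?_⟩
      · apply le_antisymm
        · rw [Submodule.span_le]
          rintro x hx
          simp only [Set.mem_insert_iff, Set.mem_singleton_iff] at hx
          rcases hx with rfl | rfl | rfl
          · exact ha
          · exact m1.add_mem (m1.smul_mem _ hb) (m1.smul_mem _ hc)
          · exact hb
        · rw [← hspan, Submodule.span_le]
          set P := Submodule.span ℝ {a, α • b + β • c, b} with hP
          have he0 : a ∈ P := Submodule.subset_span (by simp)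
          have he1 : (α • b + β • c) ∈ P := Submodule.subset_span (by simp)
          have he2 : b ∈ P := Submodule.subset_span (by simp)
          rintro x hx
          simp only [Set.mem_insert_iff, Set.mem_singleton_iff] at hx
          rcases hx with rfl | rfl | rfl
          · exact he0
          · exact he2
          · have hce : c = β⁻¹ • ((α • b + β • c) - α • b) := by
              rw [add_sub_cancel_left, smul_smul, inv_mul_cancel₀ hβ', one_smul]
            rw [hce]
            exact P.smul_mem _ (P.sub_mem he1 (P.smul_mem _ he2))
      · rw [lie_add, lie_smul, lie_smul]
        rw [hγ, zero_smul, add_zero] at hrel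
        exact hrel
    · push_neg at hβ'
      have hα' : α ≠ 0 := by
        fin_cases i₀
        · exact hi₀
        · exact absurd hβ' hi₀
        · exact absurd hγ hi₀
      have hab : ⁅a, b⁆ = 0 := by
        rw [hγ, zero_smul, add_zero, hβ', zero_smul, add_zero] at hrel
        exact (smul_eq_zero.mp hrel).resolve_left hα'
      exact ⟨a, b, c, hspan, hab⟩

lemma lie_mem_of_span' {m : Type*} [LieRing m] [LieAlgebra ℝ m]
    {S T : Set m} {P : Submodule ℝ m}
    (h : ∀ a ∈ S, ∀ b ∈ T, ⁅a, b⁆ ∈ P) :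
    ∀ x ∈ Submodule.span ℝ S, ∀ y ∈ Submodule.span ℝ T, ⁅x, y⁆ ∈ P := by
  intro x hx
  induction hx using Submodule.span_induction with
  | mem a ha =>
    intro y hy
    induction hy using Submodule.span_induction with
    | mem b hb => exact h a ha b hb
    | zero => simp
    | add y z _ _ hy hz => rw [lie_add]; exact P.add_mem hy hz
    | smul c y _ hy => rw [lie_smul]; exact P.smul_mem c hy
  | zero => intro y hy; simp
  | add x z _ _ hx hz => intro y hy; rw [add_lie]; exact P.add_mem (hx y hy) (hz y hy)
  | smul c x _ hx => intro y hy; rw [smul_lie]; exact P.smul_mem c (hx y hy)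

lemma exists_adapted_basis (m : Type*) [LieRing m] [LieAlgebra ℝ m]
    (m1 m2 : Submodule ℝ m)
    (hsup : m1 ⊔ m2 = ⊤) (hinf : m1 ⊓ m2 = ⊥)
    (hd1 : finrank ℝ ↥m1 = 3) (hd2 : finrank ℝ ↥m2 = 2)
    (hbr : ∀ x ∈ m1, ∀ y ∈ m1, ⁅x, y⁆ ∈ m2)
    (hgen : m2 ≤ Submodule.span ℝ {z | ∃ x ∈ m1, ∃ y ∈ m1, z = ⁅x, y⁆}) :
    ∃ B : Basis (Fin 5) ℝ m,
      Submodule.span ℝ {B 0, B 1, B 2} = m1 ∧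
      Submodule.span ℝ {B 3, B 4} = m2 ∧
      ⁅B 0, B 1⁆ = 0 ∧ ⁅B 0, B 2⁆ = B 3 ∧ ⁅B 1, B 2⁆ = B 4 := by
  have fd1 : FiniteDimensional ℝ ↥m1 := .of_finrank_pos (by omega)
  have fd2 : FiniteDimensional ℝ ↥m2 := .of_finrank_pos (by omega)
  obtain ⟨e0, e1, e2, hspan, h01⟩ := exists_adapted_triple m m1 m2 hd1 hd2 hbr
  have he0 : e0 ∈ m1 := hspan ▸ Submodule.subset_span (by simp)
  have he1 : e1 ∈ m1 := hspan ▸ Submodule.subset_span (by simp)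
  have he2 : e2 ∈ m1 := hspan ▸ Submodule.subset_span (by simp)
  set f0 : m := ⁅e0, e2⁆ with hf0def
  set f1 : m := ⁅e1, e2⁆ with hf1def
  have hf0 : f0 ∈ m2 := hbr _ he0 _ he2
  have hf1 : f1 ∈ m2 := hbr _ he1 _ he2
  have hspan2 : Submodule.span ℝ {f0, f1} = m2 := by
    apply le_antisymm
    · rw [Submodule.span_le]
      rintro x hx
      simp only [Set.mem_insert_iff, Set.mem_singleton_iff] at hx
      rcases hx with rfl | rfl
      exacts [hf0, hf1]
    · refine le_trans hgen ?_
      rw [Submodule.span_le]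
      rintro z ⟨x, hx, y, hy, rfl⟩
      set P := Submodule.span ℝ {f0, f1} with hP
      have hmemf0 : f0 ∈ P := Submodule.subset_span (by simp)
      have hmemf1 : f1 ∈ P := Submodule.subset_span (by simp)
      have h9 : ∀ p ∈ ({e0, e1, e2} : Set m), ∀ q ∈ ({e0, e1, e2} : Set m), ⁅p, q⁆ ∈ P := by
        rintro p hp q hq
        simp only [Set.mem_insert_iff, Set.mem_singleton_iff] at hp hq
        have h10 : ⁅e1, e0⁆ = 0 := by rw [← lie_skew, h01, neg_zero]
        have h20 : ⁅e2, e0⁆ = -f0 := by rw [← lie_skew]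
        have h21 : ⁅e2, e1⁆ = -f1 := by rw [← lie_skew]
        rcases hp with rfl | rfl | rfl <;> rcases hq with rfl | rfl | rfl <;>
          simp [h01, h10, h20, h21, hmemf0, hmemf1, P.neg_mem, P.zero_mem, ← hf0def, ← hf1def]
      exact lie_mem_of_span' h9 x (hspan.symm ▸ hx) y (hspan.symm ▸ hy)
  have fdm : FiniteDimensional ℝ m := by
    have : FiniteDimensional ℝ ↥(m1 ⊔ m2) := inferInstance
    rw [hsup] at this
    exact Module.Finite.equiv (Submodule.topEquiv)
  have hfr : finrank ℝ m = 5 := by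
    have h := Submodule.finrank_sup_add_finrank_inf_eq m1 m2
    rw [hsup, hinf, hd1, hd2, finrank_top, finrank_bot] at h
    omega
  set v : Fin 5 → m := ![e0, e1, e2, f0, f1] with hv
  have hrange : Set.range v = ({e0, e1, e2} : Set m) ∪ {f0, f1} := by
    ext x
    simp [hv, Matrix.range_cons, Matrix.range_empty, Set.singleton_union, Set.union_empty]
    tauto
  have htop : ⊤ ≤ Submodule.span ℝ (Set.range v) := by
    rw [hrange, Submodule.span_union, hspan, hspan2, hsup]
  have hcard : Fintype.card (Fin 5) = finrank ℝ m := by simp [hfr]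
  refine ⟨basisOfTopLeSpanOfCardEqFinrank v htop hcard, ?_, ?_, ?_, ?_, ?_⟩ <;>
    simp only [coe_basisOfTopLeSpanOfCardEqFinrank] <;>
    first
      | exact hspan
      | exact hspan2
      | exact h01
      | rfl

/-- There is exactly one isomorphism class of non-degenerate (3,5) nilpotent graded
Lie algebra: any two graded real Lie algebras `m = m₋₁ ⊕ m₋₂`, `m′ = m′₋₁ ⊕ m′₋₂` with
`dim m₋₁ = 3`, `dim m₋₂ = 2`, all brackets involving degree −2 elements vanishing, and
surjective bracket `Λ²m₋₁ → m₋₂`, are isomorphic by a graded Lie algebra isomorphism. -/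
theorem unique_nondegenerate_35_graded_nilpotent
    (m m' : Type*) [LieRing m] [LieAlgebra ℝ m] [LieRing m'] [LieAlgebra ℝ m']
    (m1 m2 : Submodule ℝ m) (m1' m2' : Submodule ℝ m')
    -- vector space decompositions
    (hsup : m1 ⊔ m2 = ⊤) (hinf : m1 ⊓ m2 = ⊥)
    (hsup' : m1' ⊔ m2' = ⊤) (hinf' : m1' ⊓ m2' = ⊥)
    -- dimensions
    (hd1 : finrank ℝ ↥m1 = 3) (hd2 : finrank ℝ ↥m2 = 2)
    (hd1' : finrank ℝ ↥m1' = 3) (hd2' : finrank ℝ ↥m2' = 2)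
    -- grading: [m₋₁, m₋₁] ⊆ m₋₂ and m₋₂ is central ([m, m₋₂] = 0)
    (hbr : ∀ x ∈ m1, ∀ y ∈ m1, ⁅x, y⁆ ∈ m2)
    (hcent : ∀ (x : m), ∀ y ∈ m2, ⁅x, y⁆ = 0)
    (hbr' : ∀ x ∈ m1', ∀ y ∈ m1', ⁅x, y⁆ ∈ m2')
    (hcent' : ∀ (x : m'), ∀ y ∈ m2', ⁅x, y⁆ = 0)
    -- non-degeneracy: the bracket map Λ²m₋₁ → m₋₂ is surjective
    (hgen : m2 ≤ Submodule.span ℝ {z | ∃ x ∈ m1, ∃ y ∈ m1, z = ⁅x, y⁆})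
    (hgen' : m2' ≤ Submodule.span ℝ {z | ∃ x ∈ m1', ∃ y ∈ m1', z = ⁅x, y⁆}) :
    ∃ e : m ≃ₗ⁅ℝ⁆ m',
      Submodule.map e.toLinearEquiv.toLinearMap m1 = m1' ∧
      Submodule.map e.toLinearEquiv.toLinearMap m2 = m2' := by
  obtain ⟨B, hs1, hs2, hb01, hb02, hb12⟩ :=
    exists_adapted_basis m m1 m2 hsup hinf hd1 hd2 hbr hgen
  obtain ⟨B', hs1', hs2', hb01', hb02', hb12'⟩ :=
    exists_adapted_basis m' m1' m2' hsup' hinf' hd1' hd2' hbr' hgen'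
  set φ : m ≃ₗ[ℝ] m' := B.equiv B' (Equiv.refl _) with hφdef
  have hφ : ∀ i, φ (B i) = B' i := fun i => by simp [hφdef, Basis.equiv_apply]
  -- membership facts
  have hB3 : B 3 ∈ m2 := hs2 ▸ Submodule.subset_span (by simp)
  have hB4 : B 4 ∈ m2 := hs2 ▸ Submodule.subset_span (by simp)
  have hB3' : B' 3 ∈ m2' := hs2' ▸ Submodule.subset_span (by simp)
  have hB4' : B' 4 ∈ m2' := hs2' ▸ Submodule.subset_span (by simp)
  -- centrality
  have c3 : ∀ x : m, ⁅x, B 3⁆ = 0 := fun x => hcent x _ hB3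
  have c4 : ∀ x : m, ⁅x, B 4⁆ = 0 := fun x => hcent x _ hB4
  have c3l : ∀ x : m, ⁅B 3, x⁆ = 0 := fun x => by rw [← lie_skew, c3, neg_zero]
  have c4l : ∀ x : m, ⁅B 4, x⁆ = 0 := fun x => by rw [← lie_skew, c4, neg_zero]
  have c3' : ∀ x : m', ⁅x, B' 3⁆ = 0 := fun x => hcent' x _ hB3'
  have c4' : ∀ x : m', ⁅x, B' 4⁆ = 0 := fun x => hcent' x _ hB4'
  have c3l' : ∀ x : m', ⁅B' 3, x⁆ = 0 := fun x => by rw [← lie_skew, c3', neg_zero]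
  have c4l' : ∀ x : m', ⁅B' 4, x⁆ = 0 := fun x => by rw [← lie_skew, c4', neg_zero]
  -- skew versions
  have h10 : ⁅B 1, B 0⁆ = 0 := by rw [← lie_skew, hb01, neg_zero]
  have h20 : ⁅B 2, B 0⁆ = -B 3 := by rw [← lie_skew, hb02]
  have h21 : ⁅B 2, B 1⁆ = -B 4 := by rw [← lie_skew, hb12]
  have h10' : ⁅B' 1, B' 0⁆ = 0 := by rw [← lie_skew, hb01', neg_zero]
  have h20' : ⁅B' 2, B' 0⁆ = -B' 3 := by rw [← lie_skew, hb02']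
  have h21' : ⁅B' 2, B' 1⁆ = -B' 4 := by rw [← lie_skew, hb12']
  -- the bilinear extension argument
  have key : ∀ x y : m, ⁅φ x, φ y⁆ = φ ⁅x, y⁆ := by
    let br : m →ₗ[ℝ] m →ₗ[ℝ] m := LinearMap.mk₂ ℝ (fun x y => ⁅x, y⁆) add_lie smul_lie lie_add lie_smul
    let br' : m' →ₗ[ℝ] m' →ₗ[ℝ] m' := LinearMap.mk₂ ℝ (fun x y => ⁅x, y⁆) add_lie smul_lie lie_add lie_smul
    let L1 : m →ₗ[ℝ] m →ₗ[ℝ] m' := br'.compl₁₂ φ.toLinearMap φ.toLinearMap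
    let L2 : m →ₗ[ℝ] m →ₗ[ℝ] m' := br.compr₂ φ.toLinearMap
    have hL : L1 = L2 := by
      apply B.ext; intro i
      apply B.ext; intro j
      show ⁅φ (B i), φ (B j)⁆ = φ ⁅B i, B j⁆
      fin_cases i <;> fin_cases j <;>
        simp [hφ, hb01, hb02, hb12, hb01', hb02', hb12', h10, h20, h21, h10', h20', h21',
          c3, c4, c3l, c4l, c3', c4', c3l', c4l', lie_self, map_zero, map_neg]
    intro x y
    exact LinearMap.congr_fun (LinearMap.congr_fun hL x) y
  refine ⟨{ toLieHom := { toLinearMap := φ.toLinearMap,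
                          map_lie' := fun {x y} => (key x y).symm },
            invFun := φ.symm,
            left_inv := φ.left_inv,
            right_inv := φ.right_inv }, ?_, ?_⟩
  · show Submodule.map (φ : m →ₗ[ℝ] m') m1 = m1'
    rw [← hs1, ← hs1', Submodule.map_span]
    congr 1
    rw [Set.image_insert_eq, Set.image_insert_eq, Set.image_singleton]
    simp [hφ]
  · show Submodule.map (φ : m →ₗ[ℝ] m') m2 = m2'
    rw [← hs2, ← hs2', Submodule.map_span]
    congr 1
    rw [Set.image_insert_eq, Set.image_singleton]
    simp [hφ]
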